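/- arXiv:0906.4609 — 3 statements merged into one kernel-verified Lean document; each statement's English description precedes it below -/
import Mathlib

section
/- If G is a finite König–Egerváry graph, then the critical difference of G equals the independence number minus the matching number: d(G) = α(G) − μ(G). -/
namespace KEPaper

open SimpleGraph

variable {V : Type*}

/-- `nbhd G S` is the set of vertices having a neighbor in `S`. -/
def nbhd (G : SimpleGraph V) (S : Set V) : Set V := {v | ∃ w ∈ S, G.Adj v w}

/-- `S` is an independent set of `G`: no two vertices of `S` are adjacent. -/
def IsIndep (G : SimpleGraph V) (S : Set V) : Prop :=
  S.Pairwise fun u v => ¬ G.Adj u v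

/-- The independence number `α(G)`: maximum cardinality of an independent set. -/
noncomputable def indepNum (G : SimpleGraph V) : ℕ :=
  sSup {n | ∃ S : Set V, IsIndep G S ∧ S.ncard = n}

/-- The matching number `μ(G)`: maximum cardinality of a matching. -/
noncomputable def matchNum (G : SimpleGraph V) : ℕ :=
  sSup {n | ∃ M : Subgraph G, M.IsMatching ∧ M.edgeSet.ncard = n}

/-- `S` is a maximum independent set of `G`. -/
def IsMaxIndep (G : SimpleGraph V) (S : Set V) : Prop :=
  IsIndep G S ∧ S.ncard = indepNum G

/-- The critical difference `d(G) = max {|S| - |N(S)| : S independent}`. -/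
noncomputable def critDiff (G : SimpleGraph V) : ℤ :=
  sSup {d : ℤ | ∃ S : Set V, IsIndep G S ∧ d = (S.ncard : ℤ) - ((nbhd G S).ncard : ℤ)}

/-- `S` is a critical independent set: independent with `|S| - |N(S)| = d(G)`. -/
def IsCritIndep (G : SimpleGraph V) (S : Set V) : Prop :=
  IsIndep G S ∧ (S.ncard : ℤ) - ((nbhd G S).ncard : ℤ) = critDiff G

/-- `core G` is the intersection of all maximum independent sets of `G`. -/
def core (G : SimpleGraph V) : Set V := ⋂ S ∈ {S : Set V | IsMaxIndep G S}, S

/-- `G` is a König–Egerváry graph: `|V(G)| = α(G) + μ(G)`. -/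
def KoenigEgervary (G : SimpleGraph V) : Prop :=
  Nat.card V = indepNum G + matchNum G

/-- `A` is a local maximum independent set of `G`: it is a maximum independent
set of the subgraph of `G` induced by `N[A] = A ∪ N(A)`. -/
def IsLocalMaxIndep (G : SimpleGraph V) (A : Set V) : Prop :=
  IsMaxIndep (G.induce (A ∪ nbhd G A)) {x : ↥(A ∪ nbhd G A) | ↑x ∈ A}

/-! ### Auxiliary lemmas -/

lemma indep_bddAbove [Finite V] (G : SimpleGraph V) :
    BddAbove {n | ∃ S : Set V, IsIndep G S ∧ S.ncard = n} := by
  refine ⟨Nat.card V, fun n hn => ?_⟩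
  obtain ⟨S, -, rfl⟩ := hn
  simpa [Set.ncard_univ] using Set.ncard_le_ncard (Set.subset_univ S) Set.finite_univ

lemma ncard_le_indepNum [Finite V] (G : SimpleGraph V) {S : Set V} (h : IsIndep G S) :
    S.ncard ≤ indepNum G :=
  le_csSup (indep_bddAbove G) ⟨S, h, rfl⟩

lemma exists_maxIndep [Finite V] (G : SimpleGraph V) :
    ∃ A : Set V, IsIndep G A ∧ A.ncard = indepNum G := by
  have h : indepNum G ∈ {n | ∃ S : Set V, IsIndep G S ∧ S.ncard = n} :=
    Nat.sSup_mem ⟨0, ∅, by simp [IsIndep], by simp⟩ (indep_bddAbove G)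
  exact h

lemma exists_maxMatching [Finite V] (G : SimpleGraph V) :
    ∃ M : Subgraph G, M.IsMatching ∧ M.edgeSet.ncard = matchNum G := by
  have h : matchNum G ∈ {n | ∃ M : Subgraph G, M.IsMatching ∧ M.edgeSet.ncard = n} := by
    refine Nat.sSup_mem ⟨0, ⊥, ?_, by simp⟩ ?_
    · intro v hv
      simp [Subgraph.verts_bot] at hv
    · refine ⟨Nat.card (Sym2 V), fun n hn => ?_⟩
      obtain ⟨M, -, rfl⟩ := hn
      simpa [Set.ncard_univ] using
        Set.ncard_le_ncard (Set.subset_univ M.edgeSet) Set.finite_univ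
  exact h

lemma critSet_finite [Finite V] (G : SimpleGraph V) :
    {d : ℤ | ∃ S : Set V, IsIndep G S ∧
      d = (S.ncard : ℤ) - ((nbhd G S).ncard : ℤ)}.Finite := by
  have : {d : ℤ | ∃ S : Set V, IsIndep G S ∧ d = (S.ncard : ℤ) - ((nbhd G S).ncard : ℤ)} ⊆
      (fun S : Set V => (S.ncard : ℤ) - ((nbhd G S).ncard : ℤ)) '' Set.univ := by
    rintro d ⟨S, -, rfl⟩
    exact ⟨S, Set.mem_univ _, rfl⟩
  exact (Set.finite_univ.image _).subset this

lemma critSet_nonempty (G : SimpleGraph V) :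
    (0 : ℤ) ∈ {d : ℤ | ∃ S : Set V, IsIndep G S ∧
      d = (S.ncard : ℤ) - ((nbhd G S).ncard : ℤ)} := by
  refine ⟨∅, by simp [IsIndep], ?_⟩
  have : nbhd G (∅ : Set V) = ∅ := by
    ext v; simp [nbhd]
  simp [this]

lemma le_critDiff [Finite V] (G : SimpleGraph V) {S : Set V} (h : IsIndep G S) :
    (S.ncard : ℤ) - ((nbhd G S).ncard : ℤ) ≤ critDiff G :=
  le_csSup ((critSet_finite G).bddAbove) ⟨S, h, rfl⟩

lemma exists_critIndep [Finite V] (G : SimpleGraph V) :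
    ∃ S : Set V, IsIndep G S ∧
      critDiff G = (S.ncard : ℤ) - ((nbhd G S).ncard : ℤ) :=
  Set.Nonempty.csSup_mem ⟨0, critSet_nonempty G⟩ (critSet_finite G)

/-- If `v` belongs to an edge of a subgraph, the edge is `s(v, w)` for some `w`. -/
lemma edge_repr {G : SimpleGraph V} {M : Subgraph G} {e : Sym2 V} (he : e ∈ M.edgeSet)
    {v : V} (hv : v ∈ e) : ∃ w, e = s(v, w) ∧ M.Adj v w := by
  induction e with
  | _ x y =>
    rw [Subgraph.mem_edgeSet] at he
    rcases Sym2.mem_iff.mp hv with rfl | rfl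
    · exact ⟨y, rfl, he⟩
    · exact ⟨x, Sym2.eq_swap, he.symm⟩

/-- In a matching, a vertex belongs to at most one edge. -/
lemma matching_edge_unique {G : SimpleGraph V} {M : Subgraph G} (hM : M.IsMatching)
    {e₁ e₂ : Sym2 V} (h₁ : e₁ ∈ M.edgeSet) (h₂ : e₂ ∈ M.edgeSet)
    {v : V} (hv₁ : v ∈ e₁) (hv₂ : v ∈ e₂) : e₁ = e₂ := by
  obtain ⟨w₁, rfl, hadj₁⟩ := edge_repr h₁ hv₁
  obtain ⟨w₂, rfl, hadj₂⟩ := edge_repr h₂ hv₂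
  obtain ⟨w, -, huniq⟩ := hM (M.edge_vert hadj₁)
  rw [huniq w₁ hadj₁, huniq w₂ hadj₂]

/-- Structure of maximum matchings in König–Egerváry graphs: every vertex outside a
maximum independent set is matched into the independent set. -/
lemma matching_structure [Finite V] (G : SimpleGraph V) (hG : KoenigEgervary G)
    {A : Set V} (hA : IsIndep G A) (hAcard : A.ncard = indepNum G)
    {M : Subgraph G} (hM : M.IsMatching) (hMcard : M.edgeSet.ncard = matchNum G) :
    ∀ v ∉ A, ∃ w ∈ A, M.Adj v w := by
  classical
  cases isEmpty_or_nonempty V with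
  | inl h => exact fun v _ => (IsEmpty.false v).elim
  | inr h => ?_
  -- choose, for each edge of M, an endpoint outside A
  set f : Sym2 V → V := fun e => Classical.epsilon (fun v => v ∈ e ∧ v ∉ A) with hf
  have hspec : ∀ e ∈ M.edgeSet, f e ∈ e ∧ f e ∉ A := by
    intro e he
    simp only [hf]
    apply Classical.epsilon_spec (p := fun v => v ∈ e ∧ v ∉ A)
    induction e with
    | _ x y =>
      rw [Subgraph.mem_edgeSet] at he
      have hadj : G.Adj x y := M.adj_sub he
      by_cases hx : x ∈ A
      · refine ⟨y, Sym2.mem_mk_right x y, fun hy => ?_⟩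
        exact hA hx hy hadj.ne hadj
      · exact ⟨x, Sym2.mem_mk_left x y, hx⟩
  have hinj : Set.InjOn f M.edgeSet := by
    intro e₁ h₁ e₂ h₂ heq
    exact matching_edge_unique hM h₁ h₂ (hspec e₁ h₁).1 (heq ▸ (hspec e₂ h₂).1)
  have hAc : Aᶜ.ncard = matchNum G := by
    have h1 := Set.ncard_add_ncard_compl A
    rw [hAcard] at h1
    rw [hG] at h1
    omega
  have himg : f '' M.edgeSet = Aᶜ := by
    apply Set.eq_of_subset_of_ncard_le
    · rintro v ⟨e, he, rfl⟩
      exact (hspec e he).2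
    · rw [Set.ncard_image_of_injOn hinj, hMcard, hAc]
    · exact Set.toFinite _
  intro v hv
  obtain ⟨e, he, hfe⟩ := himg.superset (Set.mem_compl hv)
  obtain ⟨w, rfl, hadj⟩ := edge_repr he (hfe ▸ (hspec e he).1)
  refine ⟨w, ?_, hadj⟩
  by_contra hw
  obtain ⟨e', he', hfe'⟩ := himg.superset (Set.mem_compl hw)
  have hwmem : w ∈ s(v, w) := Sym2.mem_mk_right v w
  have : s(v, w) = e' := matching_edge_unique hM he he' hwmem (hfe' ▸ (hspec e' he').1)
  have : v = w := by rw [← hfe, this, hfe']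
  exact (M.adj_sub hadj).ne this

/-- The key counting inequality. -/
lemma key_ineq [Finite V] (G : SimpleGraph V) (hG : KoenigEgervary G)
    {S : Set V} (hS : IsIndep G S) :
    S.ncard + matchNum G ≤ indepNum G + (nbhd G S).ncard := by
  classical
  cases isEmpty_or_nonempty V with
  | inl h =>
    have hv0 : Nat.card V = 0 := by simp [Nat.card_eq_zero]
    have hS0 : S.ncard = 0 := by
      have : S = ∅ := Set.eq_empty_of_isEmpty S
      simp [this]
    rw [hG] at hv0
    omega
  | inr h => ?_
  obtain ⟨A, hA, hAcard⟩ := exists_maxIndep G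
  obtain ⟨M, hM, hMcard⟩ := exists_maxMatching G
  have hstruct := matching_structure G hG hA hAcard hM hMcard
  -- partner function
  set p : V → V := fun v => Classical.epsilon (fun w => w ∈ A ∧ M.Adj v w) with hp
  have hpspec : ∀ v ∉ A, p v ∈ A ∧ M.Adj v (p v) := by
    intro v hv
    simp only [hp]
    apply Classical.epsilon_spec (p := fun w => w ∈ A ∧ M.Adj v w)
    obtain ⟨w, hw, hadj⟩ := hstruct v hv
    exact ⟨w, hw, hadj⟩
  have hpinj : ∀ v₁ ∉ A, ∀ v₂ ∉ A, p v₁ = p v₂ → v₁ = v₂ := by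
    intro v₁ h₁ v₂ h₂ heq
    have ha₁ := (hpspec v₁ h₁).2.symm
    have ha₂ := (hpspec v₂ h₂).2.symm
    rw [heq] at ha₁
    obtain ⟨w, -, huniq⟩ := hM (M.edge_vert ha₁)
    rw [huniq v₁ ha₁, huniq v₂ ha₂]
  -- p, restricted to S \ A, injects into (nbhd G S ∩ A) \ S
  have n1 : (S \ A).ncard ≤ ((nbhd G S ∩ A) \ S).ncard := by
    apply Set.ncard_le_ncard_of_injOn p
    · rintro v ⟨hvS, hvA⟩
      obtain ⟨hpA, hadj⟩ := hpspec v hvA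
      have hGadj : G.Adj v (p v) := M.adj_sub hadj
      refine ⟨⟨⟨v, hvS, hGadj.symm⟩, hpA⟩, fun hpS => ?_⟩
      exact hS hvS hpS hGadj.ne hGadj
    · rintro v₁ ⟨-, h₁⟩ v₂ ⟨-, h₂⟩ heq
      exact hpinj v₁ h₁ v₂ h₂ heq
  -- the map v ↦ (if p v ∈ S then v else p v) injects Aᶜ into (A \ S) ∪ (nbhd G S \ A)
  have n2 : Aᶜ.ncard ≤ ((A \ S) ∪ (nbhd G S \ A)).ncard := by
    apply Set.ncard_le_ncard_of_injOn (fun v => if p v ∈ S then v else p v)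
    · intro v hv
      obtain ⟨hpA, hadj⟩ := hpspec v hv
      show (if p v ∈ S then v else p v) ∈ _
      by_cases hcs : p v ∈ S
      · rw [if_pos hcs]
        exact Or.inr ⟨⟨p v, hcs, M.adj_sub hadj⟩, hv⟩
      · rw [if_neg hcs]
        exact Or.inl ⟨hpA, hcs⟩
    · intro v₁ h₁ v₂ h₂ heq
      obtain ⟨hpA₁, -⟩ := hpspec v₁ h₁
      obtain ⟨hpA₂, -⟩ := hpspec v₂ h₂
      have heq : (if p v₁ ∈ S then v₁ else p v₁) = (if p v₂ ∈ S then v₂ else p v₂) := heq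
      by_cases c₁ : p v₁ ∈ S
      · by_cases c₂ : p v₂ ∈ S
        · rwa [if_pos c₁, if_pos c₂] at heq
        · rw [if_pos c₁, if_neg c₂] at heq
          exact absurd (by rw [heq]; exact hpA₂) h₁
      · by_cases c₂ : p v₂ ∈ S
        · rw [if_neg c₁, if_pos c₂] at heq
          exact absurd (by rw [← heq]; exact hpA₁) h₂
        · rw [if_neg c₁, if_neg c₂] at heq
          exact hpinj v₁ h₁ v₂ h₂ heq
  have hAc : Aᶜ.ncard = matchNum G := by
    have h1 := Set.ncard_add_ncard_compl A
    rw [hAcard] at h1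
    rw [hG] at h1
    omega
  have c1 : (A ∩ S).ncard + (A \ S).ncard = A.ncard :=
    Set.ncard_inter_add_ncard_diff_eq_ncard A S
  have c2 : (S ∩ A).ncard + (S \ A).ncard = S.ncard :=
    Set.ncard_inter_add_ncard_diff_eq_ncard S A
  have c12 : (S ∩ A).ncard = (A ∩ S).ncard := by rw [Set.inter_comm]
  have c3 : ((A \ S) ∪ (nbhd G S \ A)).ncard ≤ (A \ S).ncard + (nbhd G S \ A).ncard :=
    Set.ncard_union_le _ _
  have c4 : ((nbhd G S ∩ A) \ S).ncard + (nbhd G S \ A).ncard ≤ (nbhd G S).ncard := by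
    have hdisj : Disjoint ((nbhd G S ∩ A) \ S) (nbhd G S \ A) := by
      apply Set.disjoint_left.mpr
      rintro v ⟨⟨-, hvA⟩, -⟩ ⟨-, hvA'⟩
      exact hvA' hvA
    rw [← Set.ncard_union_eq hdisj (Set.toFinite _) (Set.toFinite _)]
    apply Set.ncard_le_ncard _ (Set.toFinite _)
    rintro v (⟨⟨h, -⟩, -⟩ | ⟨h, -⟩) <;> exact h
  have c5 : A.ncard = indepNum G := hAcard
  omega

/-- If `G` is a finite König–Egerváry graph, then `d(G) = α(G) - μ(G)`. -/
theorem critDiff_eq_indepNum_sub_matchNum [Finite V] (G : SimpleGraph V)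
    (hG : KoenigEgervary G) :
    critDiff G = (indepNum G : ℤ) - (matchNum G : ℤ) := by
  apply le_antisymm
  · obtain ⟨S, hS, hcrit⟩ := exists_critIndep G
    have h := key_ineq G hG hS
    rw [hcrit]
    have := (Nat.cast_le (α := ℤ)).mpr h
    push_cast at this ⊢
    linarith
  · obtain ⟨A, hA, hAcard⟩ := exists_maxIndep G
    have hsub : nbhd G A ⊆ Aᶜ := by
      rintro v ⟨w, hw, hadj⟩ hvA
      exact hA hvA hw hadj.ne hadj
    have hAc : Aᶜ.ncard = matchNum G := by
      have h1 := Set.ncard_add_ncard_compl A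
      rw [hAcard] at h1
      rw [hG] at h1
      omega
    have hle : (nbhd G A).ncard ≤ matchNum G := by
      rw [← hAc]
      exact Set.ncard_le_ncard hsub (Set.toFinite _)
    have h := le_critDiff G hA
    rw [hAcard] at h
    have : (matchNum G : ℤ) ≥ ((nbhd G A).ncard : ℤ) := by exact_mod_cast hle
    linarith

end KEPaper
end

section
/- If G is a finite König–Egerváry graph, then every maximum independent set of G is a critical independent set. -/
namespace KEPaper

open SimpleGraph

variable {V : Type*}

/-- In a matching, the vertex set has twice as many elements as the edge set. -/
lemma matching_verts_ncard [Finite V] {G : SimpleGraph V} {M : Subgraph G}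
    (hM : M.IsMatching) : M.verts.ncard = 2 * M.edgeSet.ncard := by
  classical
  haveI : Fintype V := Fintype.ofFinite V
  have h12 : Fintype.card M.verts = 2 * M.coe.edgeFinset.card := by
    rw [← M.coe.sum_degrees_eq_twice_card_edges]
    rw [← Finset.card_univ, Finset.card_eq_sum_ones]
    refine Finset.sum_congr rfl fun v _ => ?_
    symm
    rw [Subgraph.coe_degree, Subgraph.degree_eq_one_iff_existsUnique_adj]
    exact hM v.2
  have h3 : M.verts.ncard = Fintype.card M.verts := by
    rw [Set.ncard_eq_toFinset_card', Set.toFinset_card]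
  have h4 : M.coe.edgeFinset.card = M.coe.edgeSet.ncard := by
    rw [Set.ncard_eq_toFinset_card', edgeFinset]
  have h5 : M.coe.edgeSet.ncard = M.edgeSet.ncard := by
    rw [← M.image_coe_edgeSet_coe]
    exact (Set.ncard_image_of_injective _ (Sym2.map.injective Subtype.val_injective)).symm
  omega
lemma indep_le_indepNum [Finite V] {G : SimpleGraph V} {S : Set V}
    (hS : IsIndep G S) : S.ncard ≤ indepNum G := by
  apply le_csSup
  · exact ⟨Nat.card V, fun n ⟨T, _, hT⟩ => hT ▸ by
      simpa [Set.ncard_univ] using Set.ncard_le_ncard (Set.subset_univ T) Set.finite_univ⟩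
  · exact ⟨S, hS, rfl⟩

/-- Key counting lemma: |A| + 2|M| ≤ n + |N(A)| for A independent, M a matching. -/
lemma key_count [Finite V] {G : SimpleGraph V} {A : Set V} (hA : IsIndep G A)
    {M : Subgraph G} (hM : M.IsMatching) :
    A.ncard + 2 * M.edgeSet.ncard ≤ Nat.card V + (nbhd G A).ncard := by
  classical
  -- partner function
  set f : V → V := fun a => if h : a ∈ M.verts then (hM h).exists.choose else a with hf
  have hfadj : ∀ a ∈ M.verts, M.Adj a (f a) := by
    intro a ha
    simp only [hf, dif_pos ha]
    exact (hM ha).exists.choose_spec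
  have hinter : (A ∩ M.verts).ncard ≤ (nbhd G A).ncard := by
    apply Set.ncard_le_ncard_of_injOn f
    · rintro a ⟨haA, haM⟩
      exact ⟨a, haA, (M.adj_sub (hfadj a haM)).symm⟩
    · rintro a ⟨haA, haM⟩ b ⟨hbA, hbM⟩ hab
      have h1 : M.Adj (f a) a := (hfadj a haM).symm
      have h2 : M.Adj (f a) b := hab ▸ (hfadj b hbM).symm
      have hw : f a ∈ M.verts := M.edge_vert h1
      exact ((hM hw).unique h1 h2)
  have hunion : (A ∪ M.verts).ncard + (A ∩ M.verts).ncard = A.ncard + M.verts.ncard :=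
    Set.ncard_union_add_ncard_inter A M.verts (Set.toFinite A) (Set.toFinite M.verts)
  have hle : (A ∪ M.verts).ncard ≤ Nat.card V := by
    simpa [Set.ncard_univ] using Set.ncard_le_ncard (Set.subset_univ _) Set.finite_univ
  have hverts := matching_verts_ncard hM
  omega

/-- If `G` is a finite König–Egerváry graph, then every maximum independent set
of `G` is a critical independent set. -/
theorem maxIndep_isCritIndep_of_KE [Finite V] (G : SimpleGraph V)
    (hG : KoenigEgervary G) :
    ∀ S : Set V, IsMaxIndep G S → IsCritIndep G S := by
  classical
  intro S hS
  obtain ⟨hSi, hScard⟩ := hS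
  refine ⟨hSi, ?_⟩
  -- V = S ∪ N(S), disjointly
  have hdisj : Disjoint S (nbhd G S) := by
    rw [Set.disjoint_left]
    rintro v hv ⟨w, hw, hadj⟩
    exact hSi hv hw hadj.ne hadj
  have hcover : S ∪ nbhd G S = Set.univ := by
    rw [Set.eq_univ_iff_forall]
    intro v
    by_contra hv
    simp only [Set.mem_union, not_or] at hv
    obtain ⟨hv1, hv2⟩ := hv
    have hvS : v ∉ S := hv1
    have hind : IsIndep G (insert v S) := by
      intro a ha b hb hab
      rcases ha with rfl | ha <;> rcases hb with rfl | hb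
      · exact absurd rfl hab
      · exact fun h => hv2 ⟨b, hb, h⟩
      · exact fun h => hv2 ⟨a, ha, h.symm⟩
      · exact hSi ha hb hab
    have := indep_le_indepNum hind
    rw [Set.ncard_insert_of_notMem hvS (Set.toFinite S)] at this
    omega
  have hsum : S.ncard + (nbhd G S).ncard = Nat.card V := by
    rw [← Set.ncard_union_eq hdisj (Set.toFinite S) (Set.toFinite _), hcover, Set.ncard_univ]
  -- get a maximum matching
  have hmem : matchNum G ∈ {n | ∃ M : Subgraph G, M.IsMatching ∧ M.edgeSet.ncard = n} := by
    apply Nat.sSup_mem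
    · exact ⟨0, ⊥, fun v hv => absurd hv (by simp [Subgraph.verts_bot] at *), by simp⟩
    · refine ⟨Nat.card (Sym2 V), fun n ⟨M, _, hMn⟩ => hMn ▸ ?_⟩
      simpa [Set.ncard_univ] using Set.ncard_le_ncard (Set.subset_univ M.edgeSet) Set.finite_univ
  obtain ⟨M, hMm, hMcard⟩ := hmem
  -- every independent A satisfies |A| - |N(A)| ≤ n - 2μ
  have hub : ∀ d ∈ {d : ℤ | ∃ T : Set V, IsIndep G T ∧
      d = (T.ncard : ℤ) - ((nbhd G T).ncard : ℤ)},
      d ≤ (Nat.card V : ℤ) - 2 * (matchNum G : ℤ) := by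
    rintro d ⟨T, hT, rfl⟩
    have := key_count hT hMm
    rw [hMcard] at this
    push_cast
    omega
  have hval : (S.ncard : ℤ) - ((nbhd G S).ncard : ℤ)
      = (Nat.card V : ℤ) - 2 * (matchNum G : ℤ) := by
    have hKE := hG
    unfold KoenigEgervary at hKE
    have h1 : S.ncard = indepNum G := hScard
    omega
  unfold critDiff
  apply le_antisymm
  · apply le_csSup
    · exact ⟨(Nat.card V : ℤ) - 2 * (matchNum G : ℤ), hub⟩
    · exact ⟨S, hSi, rfl⟩
  · rw [hval]
    exact csSup_le ⟨_, S, hSi, rfl⟩ (fun d hd => hval ▸ hub d hd)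


end KEPaper
end

section
/- If G is a finite König–Egerváry graph, then N(core(G)) equals the intersection of the complements V(G) − S taken over all maximum independent sets S of G. -/
namespace KEPaper

open SimpleGraph

variable {V : Type*}

open Classical in
/-- pick an element of the edge `e` not in `S`, if one exists -/
noncomputable def pick (S : Set V) (e : Sym2 V) : V :=
  if h : ∃ x, x ∈ e ∧ x ∉ S then h.choose else (Quot.out e).1

lemma pick_spec {S : Set V} {e : Sym2 V} (h : ∃ x, x ∈ e ∧ x ∉ S) :
    pick S e ∈ e ∧ pick S e ∉ S := by
  rw [pick, dif_pos h]
  exact h.choose_spec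

lemma exists_not_mem {G : SimpleGraph V} {S : Set V} (hS : IsIndep G S)
    {M : Subgraph G} {e : Sym2 V} (he : e ∈ M.edgeSet) : ∃ x, x ∈ e ∧ x ∉ S := by
  induction e with
  | _ a b =>
    rw [Subgraph.mem_edgeSet] at he
    by_contra h
    push_neg at h
    exact hS (h a (Sym2.mem_mk_left a b)) (h b (Sym2.mem_mk_right a b))
      (M.adj_sub he).ne (M.adj_sub he)

lemma edge_unique {G : SimpleGraph V} {M : Subgraph G} (hM : M.IsMatching)
    {e₁ e₂ : Sym2 V} {v : V} (h1 : e₁ ∈ M.edgeSet) (h2 : e₂ ∈ M.edgeSet)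
    (hv1 : v ∈ e₁) (hv2 : v ∈ e₂) : e₁ = e₂ := by
  obtain ⟨w₁, rfl⟩ := Sym2.mem_iff_exists.mp hv1
  obtain ⟨w₂, rfl⟩ := Sym2.mem_iff_exists.mp hv2
  rw [Subgraph.mem_edgeSet] at h1 h2
  obtain ⟨w, -, huniq⟩ := hM (M.edge_vert h1)
  rw [huniq w₁ h1, huniq w₂ h2]

lemma exists_maxIndep_s12 [Finite V] (G : SimpleGraph V) : ∃ S, IsMaxIndep G S := by
  have hbdd : BddAbove {n | ∃ S : Set V, IsIndep G S ∧ S.ncard = n} := by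
    refine ⟨Nat.card V, ?_⟩
    rintro n ⟨S, -, rfl⟩
    calc S.ncard ≤ (Set.univ : Set V).ncard :=
          Set.ncard_le_ncard (Set.subset_univ S) Set.finite_univ
      _ = Nat.card V := Set.ncard_univ V
  have hne : (indepNum G) ∈ {n | ∃ S : Set V, IsIndep G S ∧ S.ncard = n} :=
    Nat.sSup_mem ⟨0, ∅, Set.pairwise_empty _, by simp⟩ hbdd
  obtain ⟨S, hS, hc⟩ := hne
  exact ⟨S, hS, hc⟩

/-- Key lemma: in a KE graph, any maximum matching matches every vertex outside a
maximum independent set `S` to a vertex of `S`. -/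
lemma key [Finite V] {G : SimpleGraph V} (hG : KoenigEgervary G) {M : Subgraph G}
    (hM : M.IsMatching) (hMc : M.edgeSet.ncard = matchNum G) {S : Set V}
    (hS : IsMaxIndep G S) {v : V} (hv : v ∉ S) : ∃ w ∈ S, M.Adj v w := by
  have hcompl : (Sᶜ).ncard = M.edgeSet.ncard := by
    have h1 : S.ncard + (Sᶜ).ncard = Nat.card V := by
      rw [← Set.ncard_univ, ← Set.ncard_union_eq disjoint_compl_right S.toFinite
        Sᶜ.toFinite, Set.union_compl_self]
    rw [hS.2, hG] at h1
    rw [hMc]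
    omega
  set f := pick S with hf
  have hmem : ∀ e ∈ M.edgeSet, f e ∈ e ∧ f e ∉ S :=
    fun e he => pick_spec (exists_not_mem hS.1 he)
  have hinj : Set.InjOn f M.edgeSet := fun e₁ h1 e₂ h2 heq =>
    edge_unique hM h1 h2 (hmem _ h1).1 (heq ▸ (hmem _ h2).1)
  have himg : f '' M.edgeSet = Sᶜ := by
    apply Set.eq_of_subset_of_ncard_le
    · rintro x ⟨e, he, rfl⟩
      exact (hmem e he).2
    · rw [Set.ncard_image_of_injOn hinj, hcompl]
    · exact Sᶜ.toFinite
  obtain ⟨e, he, hfe⟩ := himg.symm.subset (show v ∈ Sᶜ from hv)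
  have hve : v ∈ e := hfe ▸ (hmem e he).1
  obtain ⟨w, rfl⟩ := Sym2.mem_iff_exists.mp hve
  rw [Subgraph.mem_edgeSet] at he
  refine ⟨w, ?_, he⟩
  by_contra hw
  obtain ⟨e', he', hfe'⟩ := himg.symm.subset (show w ∈ Sᶜ from hw)
  have hwe' : w ∈ e' := hfe' ▸ (hmem e' he').1
  have : s(v, w) = e' := edge_unique hM (Subgraph.mem_edgeSet.mpr he) he'
    (Sym2.mem_mk_right v w) hwe'
  rw [← this] at hfe'
  exact (M.adj_sub he).ne (hfe.symm.trans hfe')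

/-- If `G` is a finite König–Egerváry graph, then `N(core(G))` equals the
intersection of the complements `V(G) - S` over all maximum independent sets `S`. -/
theorem nbhd_core_eq_iInter_compl [Finite V] (G : SimpleGraph V)
    (hG : KoenigEgervary G) :
    nbhd G (core G) = ⋂ S ∈ {S : Set V | IsMaxIndep G S}, Sᶜ := by
  ext v
  simp only [Set.mem_iInter, Set.mem_setOf_eq, Set.mem_compl_iff]
  constructor
  · rintro ⟨w, hw, hadj⟩ S hS hvS
    have hwS : w ∈ S := Set.mem_iInter₂.mp hw S hS
    exact hS.1 hvS hwS hadj.ne hadj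
  · intro hv
    obtain ⟨S₀, hS₀⟩ := exists_maxIndep_s12 G
    obtain ⟨M, hM, hMc⟩ := exists_maxMatching G
    obtain ⟨w, hwS₀, hadj⟩ := key hG hM hMc hS₀ (hv S₀ hS₀)
    refine ⟨w, Set.mem_iInter₂.mpr fun S hS => ?_, M.adj_sub hadj⟩
    obtain ⟨w', hw', hadj'⟩ := key hG hM hMc hS (hv S hS)
    obtain ⟨u, -, huniq⟩ := hM (M.edge_vert hadj)
    have : w' = w := (huniq w' hadj').trans (huniq w hadj).symm
    rwa [this] at hw'

end KEPaper
end
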